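/- Let η ∈ (0, 1/2) and let C > 0. Let G and G' be graphs on vertex set [n] (n ≥ 1) that agree on all edges not incident to a set S ⊆ [n] with |S| ≤ 2ηn. For a graph H, write d(H) = 2·(number of edges of H)/n, and for T ⊆ [n] write e_H(T) for the number of edges of H inside T, e_H(T, T̄) for the number of edges of H between T and its complement, and N(T) = binom(|T|,2) + |T|(n−|T|). Suppose d(G) ≥ 1 and that for each H ∈ {G, G'} and every T ⊆ [n] with |T| ≤ 2ηn one has |e_H(T) + e_H(T, T̄) − (d(H)/n)·N(T)| ≤ C·(√(log(1/η))·√(d(H)) + log(1/η))·ηn. Then there is a constant K depending only on C such that |d(G) − d(G')| ≤ K·( η·√(log(1/η))·√(d(G))/(1−2η)⁴ + η·log(1/η)/(1−2η)² ). -/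

import Mathlib

open MeasureTheory Finset

namespace ER

abbrev Edge (n : ℕ) := {q : Fin n × Fin n // q.1 < q.2}

/-- The Erdős–Rényi measure `G(n, d/n)`: i.i.d. Bernoulli(d/n) indicators on pairs i < j. -/
noncomputable def erMeasure (n : ℕ) (d : ℝ) : Measure (Edge n → Bool) :=
  Measure.pi fun _ => (PMF.bernoulli (min (Real.toNNReal (d / n)) 1) (min_le_right _ _)).toMeasure

/-- Adjacency matrix entry of the graph encoded by `ω`. -/
noncomputable def adj {n : ℕ} (ω : Edge n → Bool) (i j : Fin n) : ℝ :=
  if h : i < j then (if ω ⟨(i, j), h⟩ then 1 else 0)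
  else if h' : j < i then (if ω ⟨(j, i), h'⟩ then 1 else 0)
  else 0

/-- Average degree `d(A) = (1/n) ∑_{i,j} A_{ij}`. -/
noncomputable def avgDeg {n : ℕ} (ω : Edge n → Bool) : ℝ :=
  (1 / n) * ∑ i, ∑ j, adj ω i j

/-- Degree of vertex `i`. -/
noncomputable def deg {n : ℕ} (ω : Edge n → Bool) (i : Fin n) : ℝ :=
  ∑ j, adj ω i j

/-- Number of edges inside `S`. -/
noncomputable def eIn {n : ℕ} (ω : Edge n → Bool) (S : Finset (Fin n)) : ℝ :=
  ∑ i ∈ S, ∑ j ∈ S, if i < j then adj ω i j else 0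

/-- Number of edges between `S` and its complement. -/
noncomputable def eCut {n : ℕ} (ω : Edge n → Bool) (S : Finset (Fin n)) : ℝ :=
  ∑ i ∈ S, ∑ j ∈ Sᶜ, adj ω i j


/-- `N(T) = binom(|T|,2) + |T|(n - |T|)`. -/
noncomputable def Nfun (n : ℕ) (T : Finset (Fin n)) : ℝ :=
  (T.card.choose 2 : ℝ) + (T.card : ℝ) * ((n : ℝ) - (T.card : ℝ))

lemma adj_nonneg {n : ℕ} (ω : Edge n → Bool) (i j : Fin n) : 0 ≤ adj ω i j := by
  unfold adj; split_ifs <;> norm_num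

lemma adj_symm {n : ℕ} (ω : Edge n → Bool) (i j : Fin n) : adj ω i j = adj ω j i := by
  unfold adj
  rcases lt_trichotomy i j with h | h | h
  · simp [h, h.asymm]
  · subst h; rfl
  · simp [h, h.asymm]

lemma adj_self {n : ℕ} (ω : Edge n → Bool) (i : Fin n) : adj ω i i = 0 := by
  simp [adj]

lemma adj_congr {n : ℕ} {G G' : Edge n → Bool} {S : Finset (Fin n)}
    (hag : ∀ q : Edge n, q.1.1 ∉ S → q.1.2 ∉ S → G q = G' q)
    {i j : Fin n} (hi : i ∉ S) (hj : j ∉ S) : adj G i j = adj G' i j := by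
  unfold adj
  by_cases h : i < j
  · simp only [dif_pos h, hag ⟨(i, j), h⟩ hi hj]
  · by_cases h' : j < i
    · simp only [dif_neg h, dif_pos h', hag ⟨(j, i), h'⟩ hj hi]
    · simp [h, h']

lemma sum_sum_adj {n : ℕ} (ω : Edge n → Bool) (T : Finset (Fin n)) :
    ∑ i ∈ T, ∑ j ∈ T, adj ω i j = 2 * eIn ω T := by
  have h1 : ∀ i j : Fin n, adj ω i j
      = (if i < j then adj ω i j else 0) + (if j < i then adj ω i j else 0) := by
    intro i j
    rcases lt_trichotomy i j with h | h | h
    · simp [h, h.asymm]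
    · subst h; simp [adj_self]
    · simp [h, h.asymm]
  calc ∑ i ∈ T, ∑ j ∈ T, adj ω i j
      = ∑ i ∈ T, ∑ j ∈ T, ((if i < j then adj ω i j else 0) + (if j < i then adj ω i j else 0)) :=
        Finset.sum_congr rfl fun i _ => Finset.sum_congr rfl fun j _ => h1 i j
    _ = (∑ i ∈ T, ∑ j ∈ T, (if i < j then adj ω i j else 0))
        + (∑ i ∈ T, ∑ j ∈ T, (if j < i then adj ω i j else 0)) := by
        simp [Finset.sum_add_distrib]
    _ = 2 * eIn ω T := by
        have h2 : (∑ i ∈ T, ∑ j ∈ T, (if j < i then adj ω i j else 0)) = eIn ω T := by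
          rw [Finset.sum_comm]
          unfold eIn
          refine Finset.sum_congr rfl fun i _ => Finset.sum_congr rfl fun j _ => ?_
          by_cases h : i < j <;> simp [h, adj_symm ω j i]
        rw [h2]; unfold eIn; ring

lemma cut_symm {n : ℕ} (ω : Edge n → Bool) (S : Finset (Fin n)) :
    ∑ i ∈ Sᶜ, ∑ j ∈ S, adj ω i j = eCut ω S := by
  rw [Finset.sum_comm]
  unfold eCut
  exact Finset.sum_congr rfl fun i _ => Finset.sum_congr rfl fun j _ => adj_symm ω j i

lemma total_split {n : ℕ} (ω : Edge n → Bool) (S : Finset (Fin n)) :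
    ∑ i, ∑ j, adj ω i j = 2 * eIn ω S + 2 * eCut ω S + 2 * eIn ω Sᶜ := by
  have hsplit : ∀ g : Fin n → ℝ, ∑ i, g i = ∑ i ∈ S, g i + ∑ i ∈ Sᶜ, g i :=
    fun g => (Finset.sum_add_sum_compl S g).symm
  rw [hsplit (fun i => ∑ j, adj ω i j)]
  have h1 : ∑ i ∈ S, ∑ j, adj ω i j
      = ∑ i ∈ S, ∑ j ∈ S, adj ω i j + ∑ i ∈ S, ∑ j ∈ Sᶜ, adj ω i j := by
    rw [← Finset.sum_add_distrib]
    exact Finset.sum_congr rfl fun i _ => hsplit (adj ω i)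
  have h2 : ∑ i ∈ Sᶜ, ∑ j, adj ω i j
      = ∑ i ∈ Sᶜ, ∑ j ∈ S, adj ω i j + ∑ i ∈ Sᶜ, ∑ j ∈ Sᶜ, adj ω i j := by
    rw [← Finset.sum_add_distrib]
    exact Finset.sum_congr rfl fun i _ => hsplit (adj ω i)
  rw [h1, h2, sum_sum_adj ω S, sum_sum_adj ω Sᶜ, cut_symm ω S]
  show _ + eCut ω S + _ = _
  ring

lemma eIn_congr {n : ℕ} {G G' : Edge n → Bool} {S : Finset (Fin n)}
    (hag : ∀ q : Edge n, q.1.1 ∉ S → q.1.2 ∉ S → G q = G' q) :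
    eIn G Sᶜ = eIn G' Sᶜ := by
  unfold eIn
  refine Finset.sum_congr rfl fun i hi => Finset.sum_congr rfl fun j hj => ?_
  rw [Finset.mem_compl] at hi hj
  by_cases h : i < j <;> simp [h, adj_congr hag hi hj]

lemma sqrt_add_le' {x y : ℝ} (hx : 0 ≤ x) (hy : 0 ≤ y) :
    Real.sqrt (x + y) ≤ Real.sqrt x + Real.sqrt y := by
  have h : x + y ≤ (Real.sqrt x + Real.sqrt y) ^ 2 := by
    nlinarith [Real.sq_sqrt hx, Real.sq_sqrt hy,
      mul_nonneg (Real.sqrt_nonneg x) (Real.sqrt_nonneg y)]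
  calc Real.sqrt (x + y) ≤ Real.sqrt ((Real.sqrt x + Real.sqrt y) ^ 2) := Real.sqrt_le_sqrt h
    _ = Real.sqrt x + Real.sqrt y := Real.sqrt_sq (by positivity)

lemma quad_bound {x a b : ℝ} (hx : 0 ≤ x) (ha : 0 ≤ a) (hb : 0 ≤ b)
    (h : x ^ 2 ≤ a * x + b) : x ≤ a + Real.sqrt b := by
  by_contra hc
  push_neg at hc
  nlinarith [Real.sq_sqrt hb, Real.sqrt_nonneg b,
    mul_nonneg hx (Real.sqrt_nonneg b)]


lemma gam2_le_one {g : ℝ} (h0 : 0 < g) (h1 : g ≤ 1) : g ^ 2 ≤ 1 := by nlinarith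

lemma v_le_one {v w η : ℝ} (hv0 : 0 ≤ v) (hη : 0 < η) (hη2 : η < 1/2)
    (hsq : v ^ 2 = η * w) (hw : w ≤ 1) : v ≤ 1 := by nlinarith

lemma M_lower {x sc g : ℝ} (hsc0 : 0 ≤ sc) (h : g * x * (g * x) ≤ (x - sc) * (x - sc)) :
    x ^ 2 * g ^ 2 / 2 ≤ x ^ 2 / 2 - (sc * (sc - 1) / 2 + sc * (x - sc)) := by nlinarith

lemma amgm_sq {a s : ℝ} : a * s ≤ ((a + s) / 2) ^ 2 := by nlinarith [sq_nonneg (a - s)]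

lemma four_mul_le_sq {C u : ℝ} : 4 * C * u ≤ (2 * C + u / 2) ^ 2 := by
  nlinarith [sq_nonneg (2 * C - u / 2)]


set_option maxHeartbeats 1000000 in
/-- Identifiability (Section 2.1): two graphs differing only on edges incident to at most
a 2η-fraction of vertices, both satisfying the goodness condition, have close average degrees. -/
theorem identifiability :
    ∀ C : ℝ, 0 < C →
    ∃ K : ℝ, 0 < K ∧
      ∀ n : ℕ, 1 ≤ n →
      ∀ η : ℝ, 0 < η → η < 1 / 2 →
      ∀ G G' : Edge n → Bool, ∀ S : Finset (Fin n),
        (S.card : ℝ) ≤ 2 * η * n →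
        (∀ q : Edge n, q.1.1 ∉ S → q.1.2 ∉ S → G q = G' q) →
        1 ≤ avgDeg G →
        (∀ T : Finset (Fin n), (T.card : ℝ) ≤ 2 * η * n →
          |eIn G T + eCut G T - avgDeg G / n * Nfun n T| ≤
            C * (Real.sqrt (Real.log (1 / η)) * Real.sqrt (avgDeg G) + Real.log (1 / η))
              * (η * n)) →
        (∀ T : Finset (Fin n), (T.card : ℝ) ≤ 2 * η * n →
          |eIn G' T + eCut G' T - avgDeg G' / n * Nfun n T| ≤
            C * (Real.sqrt (Real.log (1 / η)) * Real.sqrt (avgDeg G') + Real.log (1 / η))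
              * (η * n)) →
        |avgDeg G - avgDeg G'| ≤
          K * (η * Real.sqrt (Real.log (1 / η)) * Real.sqrt (avgDeg G) / (1 - 2 * η) ^ 4
              + η * Real.log (1 / η) / (1 - 2 * η) ^ 2) := by
  intro C hC
  refine ⟨10 * C ^ 2 + 10 * C, by positivity, ?_⟩
  intro n hn η hη hη2 G G' S hS hag hd1 hgood hgood'
  have hg := hgood S hS
  have hg' := hgood' S hS
  clear hgood hgood'
  -- abbreviations
  set L := Real.log (1 / η) with hLdef
  set d := avgDeg G with hddef
  set d' := avgDeg G' with hd'def
  set s := Real.sqrt d with hsdef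
  set s' := Real.sqrt d' with hs'def
  set γ := 1 - 2 * η with hγdef
  set v := η * Real.sqrt L with hvdef
  set u := η * L / γ ^ 2 with hudef
  -- basic positivity facts
  have hγ0 : 0 < γ := by rw [hγdef]; linarith
  have hγ1 : γ ≤ 1 := by rw [hγdef]; linarith
  have hγne : γ ≠ 0 := ne_of_gt hγ0
  have hgam2 : γ ^ 2 ≤ 1 := gam2_le_one hγ0 hγ1
  have hn0 : (0:ℝ) < (n:ℝ) := by exact_mod_cast Nat.pos_of_ne_zero (by omega)
  have hnne : (n:ℝ) ≠ 0 := ne_of_gt hn0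
  have hL0 : 0 < L := by
    rw [hLdef]; apply Real.log_pos; rw [lt_div_iff₀ hη]; linarith
  have hsL0 : 0 ≤ Real.sqrt L := Real.sqrt_nonneg L
  have hw1 : η * L ≤ 1 := by
    have h := Real.log_le_sub_one_of_pos (show (0:ℝ) < 1/η by positivity)
    rw [← hLdef] at h
    have h2 : η * L ≤ η * (1/η - 1) := mul_le_mul_of_nonneg_left h hη.le
    have h3 : η * (1/η - 1) = 1 - η := by field_simp
    linarith only [h2, h3, hη]
  have hw0 : 0 ≤ η * L := by positivity
  have hv0 : 0 ≤ v := by rw [hvdef]; positivity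
  have hv1 : v ≤ 1 := by
    have hsq : v ^ 2 = η * (η * L) := by rw [hvdef]; rw [mul_pow, Real.sq_sqrt hL0.le]; ring
    have h4 : η * (η * L) ≤ η * 1 := mul_le_mul_of_nonneg_left hw1 hη.le
    have h5 : v ^ 2 ≤ η * (η * L) := le_of_eq hsq
    exact v_le_one hv0 hη hη2 hsq (by linarith only [hw1])
  have hd0 : (0:ℝ) ≤ d := by linarith only [hd1]
  have hd'0 : (0:ℝ) ≤ d' := by
    rw [hd'def]; unfold avgDeg
    have h := Finset.sum_nonneg fun i (_ : i ∈ (univ : Finset (Fin n))) =>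
      Finset.sum_nonneg fun j (_ : j ∈ (univ : Finset (Fin n))) => adj_nonneg G' i j
    have : (0:ℝ) ≤ 1 / (n:ℝ) := by positivity
    exact mul_nonneg this h
  have hs0 : 0 ≤ s := Real.sqrt_nonneg d
  have hs'0 : 0 ≤ s' := Real.sqrt_nonneg d'
  have hs2 : s ^ 2 = d := Real.sq_sqrt hd0
  have hs'2 : s' ^ 2 = d' := Real.sq_sqrt hd'0
  have hs1 : 1 ≤ s := by
    rw [hsdef]
    calc (1:ℝ) = Real.sqrt 1 := Real.sqrt_one.symm
      _ ≤ Real.sqrt d := Real.sqrt_le_sqrt hd1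
  -- combinatorial identity
  have e1 : (n:ℝ) * d = 2 * eIn G S + 2 * eCut G S + 2 * eIn G Sᶜ := by
    rw [hddef]; unfold avgDeg; rw [← total_split]; field_simp
  have e2 : (n:ℝ) * d' = 2 * eIn G' S + 2 * eCut G' S + 2 * eIn G' Sᶜ := by
    rw [hd'def]; unfold avgDeg; rw [← total_split]; field_simp
  have eR : eIn G Sᶜ = eIn G' Sᶜ := eIn_congr hag
  have e3 : (n:ℝ) * d - (n:ℝ) * d' =
      2 * (eIn G S + eCut G S) - 2 * (eIn G' S + eCut G' S) := by
    rw [e1, e2, eR]; ring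
  -- goodness, multiplied by n
  have hgn : |(n:ℝ) * (eIn G S + eCut G S) - d * Nfun n S|
      ≤ (n:ℝ) * (C * (Real.sqrt L * s + L) * (η * n)) := by
    have h1 : (n:ℝ) * (eIn G S + eCut G S) - d * Nfun n S
        = (n:ℝ) * (eIn G S + eCut G S - d / n * Nfun n S) := by
      field_simp
    rw [h1, abs_mul, abs_of_pos hn0]
    exact mul_le_mul_of_nonneg_left hg hn0.le
  have hgn' : |(n:ℝ) * (eIn G' S + eCut G' S) - d' * Nfun n S|
      ≤ (n:ℝ) * (C * (Real.sqrt L * s' + L) * (η * n)) := by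
    have h1 : (n:ℝ) * (eIn G' S + eCut G' S) - d' * Nfun n S
        = (n:ℝ) * (eIn G' S + eCut G' S - d' / n * Nfun n S) := by
      field_simp
    rw [h1, abs_mul, abs_of_pos hn0]
    exact mul_le_mul_of_nonneg_left hg' hn0.le
  -- lower bound on n^2/2 - N
  have hsc0 : (0:ℝ) ≤ (S.card:ℝ) := Nat.cast_nonneg _
  have hscn : (S.card:ℝ) ≤ (n:ℝ) := by
    have h : S.card ≤ n := by simpa using Finset.card_le_univ S
    exact_mod_cast h
  have hNval : Nfun n S = (S.card:ℝ) * ((S.card:ℝ) - 1) / 2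
      + (S.card:ℝ) * ((n:ℝ) - (S.card:ℝ)) := by
    unfold Nfun; rw [Nat.cast_choose_two]
  have hgn2 : γ * (n:ℝ) ≤ (n:ℝ) - (S.card:ℝ) := by
    have h := hS
    have h2 : γ * (n:ℝ) = (n:ℝ) - 2 * η * (n:ℝ) := by rw [hγdef]; ring
    linarith only [h, h2]
  have hgnn : 0 ≤ γ * (n:ℝ) := mul_nonneg hγ0.le hn0.le
  have hM : (n:ℝ) ^ 2 * γ ^ 2 / 2 ≤ (n:ℝ) ^ 2 / 2 - Nfun n S := by
    rw [hNval]
    have h := mul_self_le_mul_self hgnn hgn2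
    have h2 : γ * (n:ℝ) * (γ * (n:ℝ)) ≤ ((n:ℝ) - (S.card:ℝ)) * ((n:ℝ) - (S.card:ℝ)) := by
      calc γ * (n:ℝ) * (γ * (n:ℝ)) = γ * (n:ℝ) * (γ * (n:ℝ)) := rfl
        _ ≤ _ := h
    exact M_lower hsc0 h2
  -- key bound
  have e4 : (d - d') * ((n:ℝ) ^ 2 / 2 - Nfun n S)
      = ((n:ℝ) * (eIn G S + eCut G S) - d * Nfun n S)
        - ((n:ℝ) * (eIn G' S + eCut G' S) - d' * Nfun n S) := by
    linear_combination ((n:ℝ) / 2) * e3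
  have hMnn : 0 ≤ (n:ℝ) ^ 2 / 2 - Nfun n S := le_trans (by positivity) hM
  have key1 : |d - d'| * ((n:ℝ) ^ 2 / 2 - Nfun n S)
      ≤ (n:ℝ) * (C * (Real.sqrt L * s + L) * (η * n))
        + (n:ℝ) * (C * (Real.sqrt L * s' + L) * (η * n)) := by
    rw [← abs_of_nonneg hMnn, ← abs_mul, e4]
    refine le_trans (abs_sub _ _) (add_le_add hgn hgn')
  set a := 2 * C * η * Real.sqrt L / γ ^ 2 with hadef
  set c := 4 * C * η * L / γ ^ 2 with hcdef
  have ha0 : 0 ≤ a := by rw [hadef]; positivity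
  have hc0 : 0 ≤ c := by rw [hcdef]; positivity
  have key2 : |d - d'| ≤ a * s + a * s' + c := by
    have hm : (0:ℝ) < (n:ℝ) ^ 2 * γ ^ 2 / 2 := by positivity
    have h1 : |d - d'| * ((n:ℝ) ^ 2 * γ ^ 2 / 2)
        ≤ |d - d'| * ((n:ℝ) ^ 2 / 2 - Nfun n S) :=
      mul_le_mul_of_nonneg_left hM (abs_nonneg _)
    have h2 : (a * s + a * s' + c) * ((n:ℝ) ^ 2 * γ ^ 2 / 2)
        = (n:ℝ) * (C * (Real.sqrt L * s + L) * (η * n))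
          + (n:ℝ) * (C * (Real.sqrt L * s' + L) * (η * n)) := by
      rw [hadef, hcdef]; field_simp; ring
    have h3 := h1.trans (key1.trans h2.ge)
    exact le_of_mul_le_mul_right h3 hm
  -- bound s'
  have hquad : s' ^ 2 ≤ a * s' + (s ^ 2 + a * s + c) := by
    have hdd : d' - d ≤ |d - d'| := by rw [abs_sub_comm]; exact le_abs_self _
    linarith only [key2, hdd, hs2, hs'2]
  have hb0 : 0 ≤ s ^ 2 + a * s + c := by positivity
  have hs'le : s' ≤ a + Real.sqrt (s ^ 2 + a * s + c) := quad_bound hs'0 ha0 hb0 hquad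
  have hsqb : Real.sqrt (s ^ 2 + a * s + c) ≤ s + Real.sqrt (a * s) + Real.sqrt c := by
    have h1 : Real.sqrt (s ^ 2 + a * s + c) ≤ Real.sqrt (s ^ 2 + a * s) + Real.sqrt c :=
      sqrt_add_le' (by positivity) hc0
    have h2 : Real.sqrt (s ^ 2 + a * s) ≤ Real.sqrt (s ^ 2) + Real.sqrt (a * s) :=
      sqrt_add_le' (sq_nonneg s) (mul_nonneg ha0 hs0)
    have h3 : Real.sqrt (s ^ 2) = s := Real.sqrt_sq hs0
    linarith only [h1, h2, h3]
  have hsqas : Real.sqrt (a * s) ≤ (a + s) / 2 := by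
    have h1 : a * s ≤ ((a + s) / 2) ^ 2 := amgm_sq
    calc Real.sqrt (a * s) ≤ Real.sqrt (((a + s) / 2) ^ 2) := Real.sqrt_le_sqrt h1
      _ = (a + s) / 2 := Real.sqrt_sq (by positivity)
  have hu0 : 0 ≤ u := by rw [hudef]; positivity
  have hceq : c = 4 * C * u := by rw [hcdef, hudef]; field_simp
  have hsqc : Real.sqrt c ≤ 2 * C + u / 2 := by
    have h1 : c ≤ (2 * C + u / 2) ^ 2 := by
      rw [hceq]; exact four_mul_le_sq
    calc Real.sqrt c ≤ Real.sqrt ((2 * C + u / 2) ^ 2) := Real.sqrt_le_sqrt h1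
      _ = 2 * C + u / 2 := Real.sqrt_sq (by positivity)
  have hs'final : s' ≤ (3/2) * a + (3/2) * s + 2 * C + u / 2 := by
    linarith only [hs'le, hsqb, hsqas, hsqc]
  -- assemble
  have step1 : |d - d'| ≤ a * s + a * ((3/2) * a + (3/2) * s + 2 * C + u / 2) + c := by
    have h := mul_le_mul_of_nonneg_left hs'final ha0
    linarith only [h, key2]
  have hγ4 : (0:ℝ) < γ ^ 4 := by positivity
  have final : a * s + a * ((3/2) * a + (3/2) * s + 2 * C + u / 2) + c
      ≤ (10 * C ^ 2 + 10 * C) * (v * s / γ ^ 4 + u) := by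
    refine le_of_mul_le_mul_right ?_ hγ4
    have lhs_eq : (a * s + a * ((3/2) * a + (3/2) * s + 2 * C + u / 2) + c) * γ ^ 4
        = 2 * C * v * s * γ ^ 2 + 3 * C * v * s * γ ^ 2 + 6 * C ^ 2 * v * v
          + 4 * C ^ 2 * v * γ ^ 2 + C * v * (η * L) + 4 * C * (η * L) * γ ^ 2 := by
      rw [hadef, hcdef, hudef, hvdef]; field_simp; ring
    have rhs_eq : ((10 * C ^ 2 + 10 * C) * (v * s / γ ^ 4 + u)) * γ ^ 4
        = (10 * C ^ 2 + 10 * C) * (v * s) + (10 * C ^ 2 + 10 * C) * ((η * L) * γ ^ 2) := by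
      rw [hudef]; field_simp
    rw [lhs_eq, rhs_eq]
    have p1 : 0 ≤ C * (v * s) * (1 - γ ^ 2) :=
      mul_nonneg (mul_nonneg hC.le (mul_nonneg hv0 hs0)) (by linarith)
    have p2 : 0 ≤ C ^ 2 * v * (s - v) :=
      mul_nonneg (mul_nonneg (sq_nonneg C) hv0) (by linarith)
    have p3 : 0 ≤ C ^ 2 * v * (s - γ ^ 2) :=
      mul_nonneg (mul_nonneg (sq_nonneg C) hv0) (by linarith)
    have p4 : 0 ≤ C * v * (s - η * L) :=
      mul_nonneg (mul_nonneg hC.le hv0) (by linarith)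
    have p5 : 0 ≤ C * (v * s) := mul_nonneg hC.le (mul_nonneg hv0 hs0)
    have p6 : 0 ≤ (10 * C ^ 2 + 6 * C) * ((η * L) * γ ^ 2) :=
      mul_nonneg (by positivity) (mul_nonneg hw0 (sq_nonneg γ))
    linarith only [p1, p2, p3, p4, p5, p6]
  -- conclude
  calc |d - d'| ≤ a * s + a * ((3/2) * a + (3/2) * s + 2 * C + u / 2) + c := step1
    _ ≤ (10 * C ^ 2 + 10 * C) * (v * s / γ ^ 4 + u) := final
    _ = (10 * C ^ 2 + 10 * C) * (v * s / γ ^ 4 + η * L / γ ^ 2) := by rw [hudef]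


end ER
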